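/- Let A be a finite nonempty subset of an abelian group with D = A − A and |D| = K|A|. Then E₃(A) ≤ (1 + 2/K)(E(A) − |A|⁴/|D|)|A| + |A|⁶/|D|². -/

import Mathlib

open Finset Pointwise

private lemma E3_aux1 (a d K c : ℝ) (ha : a ≠ 0) (hd : d ≠ 0)
    (hK : K = d / a) (hc : c = a ^ 2 / d) : (1 + 2 / K) * a = (a - c) + 3 * c := by
  subst hK hc
  field_simp
  ring

private lemma E3_aux2 (a d c : ℝ) (hd : d ≠ 0) (hc : c = a ^ 2 / d) :
    a ^ 6 / d ^ 2 = c ^ 3 * d := by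
  subst hc
  field_simp

set_option maxHeartbeats 1000000 in
theorem E3_upper_bound {G : Type*} [AddCommGroup G] [Fintype G] [DecidableEq G]
    (A : Finset G) (hA : A.Nonempty) (K : ℝ)
    (hK : ((A - A).card : ℝ) = K * A.card) :
    (∑ x : G, ((A ∩ (A + {x})).card : ℝ) ^ 3) ≤
      (1 + 2 / K) *
        ((∑ x : G, ((A ∩ (A + {x})).card : ℝ) ^ 2) - (A.card : ℝ) ^ 4 / ((A - A).card : ℝ))
        * (A.card : ℝ)
      + (A.card : ℝ) ^ 6 / ((A - A).card : ℝ) ^ 2 := by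
  classical
  set f : G → ℝ := fun x => ((A ∩ (A + {x})).card : ℝ) with hf
  set D : Finset G := A - A with hD
  set a : ℝ := (A.card : ℝ) with ha
  set d : ℝ := (D.card : ℝ) with hd
  have hmem : ∀ x y : G, y ∈ A + ({x} : Finset G) ↔ y - x ∈ A := by
    intro x y
    rw [Finset.mem_add]
    constructor
    · rintro ⟨p, hp, q, hq, rfl⟩; simp only [Finset.mem_singleton] at hq
      simp [hq, hp]
    · intro h; exact ⟨y - x, h, x, by simp⟩
  have ha0 : (0:ℝ) < a := by
    simp only [ha]; exact_mod_cast Finset.card_pos.mpr hA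
  obtain ⟨a0, ha0mem⟩ := hA
  have hda : a ≤ d := by
    simp only [ha, hd]
    have : A.card ≤ D.card := by
      apply Finset.card_le_card_of_injOn (fun y => y - a0)
      · intro y hy; exact Finset.sub_mem_sub hy ha0mem
      · intro y _ z _ h; simpa using h
    exact_mod_cast this
  have hd0 : (0:ℝ) < d := lt_of_lt_of_le ha0 hda
  -- f vanishes off D
  have hsupp : ∀ x : G, x ∉ D → f x = 0 := by
    intro x hx
    simp only [hf]
    norm_cast
    rw [Finset.card_eq_zero, Finset.eq_empty_iff_forall_notMem]
    intro y hy
    rw [Finset.mem_inter, hmem] at hy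
    have := Finset.sub_mem_sub hy.1 hy.2
    rw [sub_sub_cancel] at this
    exact hx this
  -- f ≤ a
  have hfle : ∀ x : G, f x ≤ a := by
    intro x
    simp only [hf, ha]
    exact_mod_cast Finset.card_le_card (Finset.inter_subset_left)
  have hfnn : ∀ x : G, 0 ≤ f x := fun x => by positivity
  -- total mass: ∑ f = a^2
  have hmass : ∑ x ∈ D, f x = a ^ 2 := by
    have h1 : ∑ x : G, f x = ∑ x ∈ D, f x := by
      rw [← Finset.sum_subset (Finset.subset_univ D)]
      intro x _ hx; exact hsupp x hx
    rw [← h1]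
    have h2 : ∀ x : G, f x = ∑ y ∈ A, if y - x ∈ A then (1:ℝ) else 0 := by
      intro x
      have he : A ∩ (A + {x}) = A.filter (fun y => y - x ∈ A) := by
        rw [← Finset.filter_mem_eq_inter]
        exact Finset.filter_congr (fun y _ => hmem x y)
      simp only [hf]
      rw [he, Finset.card_filter]
      push_cast
      rfl
    simp only [h2]
    rw [Finset.sum_comm]
    have h3 : ∀ y : G, ∑ x : G, (if y - x ∈ A then (1:ℝ) else 0) = a := by
      intro y
      calc ∑ x : G, (if y - x ∈ A then (1:ℝ) else 0)
          = ∑ z : G, (if z ∈ A then (1:ℝ) else 0) :=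
            Equiv.sum_comp (Equiv.subLeft y) (fun z => if z ∈ A then (1:ℝ) else 0)
        _ = a := by simp [Finset.sum_ite_mem, ha]
    simp only [h3]
    rw [Finset.sum_const, nsmul_eq_mul, ha]
    ring
  -- restrict the statement sums to D
  have hrestrict : ∀ k : ℕ, k ≠ 0 → ∑ x : G, f x ^ k = ∑ x ∈ D, f x ^ k := by
    intro k hk
    rw [← Finset.sum_subset (Finset.subset_univ D)]
    intro x _ hx
    rw [hsupp x hx, zero_pow hk]
  set c : ℝ := a ^ 2 / d with hc
  have hc0 : 0 ≤ c := by positivity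
  have hMnn : (0:ℝ) ≤ a - c := by
    rw [hc, sub_nonneg, div_le_iff₀ hd0]
    nlinarith
  -- linear term vanishes
  have h0 : ∑ x ∈ D, (f x - c) = 0 := by
    rw [Finset.sum_sub_distrib, hmass, Finset.sum_const, nsmul_eq_mul]
    rw [hc]
    have : (D.card : ℝ) = d := hd.symm
    rw [this]
    field_simp
    ring
  -- second moment
  have hS2 : ∑ x ∈ D, (f x - c) ^ 2 = (∑ x ∈ D, f x ^ 2) - a ^ 4 / d := by
    have h : ∀ x ∈ D, (f x - c) ^ 2 = f x ^ 2 - 2 * c * f x + c ^ 2 := fun x _ => by ring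
    rw [Finset.sum_congr rfl h, Finset.sum_add_distrib, Finset.sum_sub_distrib,
      ← Finset.mul_sum, hmass, Finset.sum_const, nsmul_eq_mul]
    have : (D.card : ℝ) = d := hd.symm
    rw [this, hc]
    field_simp
    ring
  -- third moment expansion
  have hexp3 : ∑ x ∈ D, f x ^ 3 =
      (∑ x ∈ D, (f x - c) ^ 3) + 3 * c * (∑ x ∈ D, (f x - c) ^ 2)
        + 3 * c ^ 2 * (∑ x ∈ D, (f x - c)) + c ^ 3 * d := by
    have h : ∀ x ∈ D, f x ^ 3 =
        (f x - c) ^ 3 + 3 * c * (f x - c) ^ 2 + 3 * c ^ 2 * (f x - c) + c ^ 3 :=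
      fun x _ => by ring
    rw [Finset.sum_congr rfl h, Finset.sum_add_distrib, Finset.sum_add_distrib,
      Finset.sum_add_distrib, ← Finset.mul_sum, ← Finset.mul_sum, Finset.sum_const,
      nsmul_eq_mul]
    have : (D.card : ℝ) = d := hd.symm
    rw [this]
    ring
  -- cube bound
  have hcube : ∑ x ∈ D, (f x - c) ^ 3 ≤ (a - c) * ∑ x ∈ D, (f x - c) ^ 2 := by
    rw [Finset.mul_sum]
    apply Finset.sum_le_sum
    intro x _
    have h1 : f x - c ≤ a - c := by linarith [hfle x]
    nlinarith [mul_nonneg (sub_nonneg.2 h1) (sq_nonneg (f x - c))]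
  have hKd : K = d / a := by rw [eq_div_iff ha0.ne']; linarith [hK]
  have e3 : (∑ x : G, ((A ∩ (A + {x})).card : ℝ) ^ 3) = ∑ x ∈ D, f x ^ 3 :=
    hrestrict 3 (by norm_num)
  have e2 : (∑ x : G, ((A ∩ (A + {x})).card : ℝ) ^ 2) = ∑ x ∈ D, f x ^ 2 :=
    hrestrict 2 (by norm_num)
  rw [e3, e2]
  have hco1 : (1 + 2 / K) * a = (a - c) + 3 * c :=
    E3_aux1 a d K c ha0.ne' hd0.ne' hKd hc
  have hco2 : a ^ 6 / d ^ 2 = c ^ 3 * d := E3_aux2 a d c hd0.ne' hc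
  have hgoal : (1 + 2 / K) * ((∑ x ∈ D, f x ^ 2) - a ^ 4 / d) * a + a ^ 6 / d ^ 2
      = ((a - c) + 3 * c) * ((∑ x ∈ D, (f x - c) ^ 2)) + c ^ 3 * d := by
    rw [hS2]
    linear_combination ((∑ x ∈ D, f x ^ 2) - a ^ 4 / d) * hco1 + hco2
  rw [hgoal, hexp3, h0]
  nlinarith [hcube]
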